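/- With Ξ = Θ₁ Σ Θ₂ a Smith factorization, univariate filter families g_j^k (k ∈ ℤ_{σ_j}, g_j^0 = h_j) satisfying ∑_{n∈ℤ} g_j^k(n) g_j^{k'}(n − σ_j m) = |σ_j| δ_{k,k'} δ(m), and b_η := (g₁^{η₁} ⊗ ⋯ ⊗ g_s^{η_s})(Θ₁^{-1}·) for η ∈ ℤ_{σ₁}×⋯×ℤ_{σ_s}, the filters satisfy the filterbank QMF identity ∑_{α∈ℤ^s} b_η(α) b_{η'}(α − Ξγ) = |det Ξ| δ_{η,η'} δ(γ) for all γ ∈ ℤ^s and all multi-indices η, η'. -/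

import Mathlib

open Function

lemma finsum_pi_prod_aux {s : ℕ} (f : Fin s → ℤ → ℝ)
    (hf : ∀ j, (Function.support (f j)).Finite) :
    ∑ᶠ β : Fin s → ℤ, ∏ j, f j (β j) = ∏ j, ∑ᶠ n, f j n := by
  classical
  have h2 : Function.support (fun β : Fin s → ℤ => ∏ j, f j (β j)) ⊆
      ↑(Fintype.piFinset fun j => (hf j).toFinset) := by
    intro β hβ
    simp only [Finset.mem_coe, Fintype.mem_piFinset, Set.Finite.mem_toFinset]
    intro j
    by_contra h
    have h0 : f j (β j) = 0 := Function.notMem_support.mp h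
    exact hβ (Finset.prod_eq_zero (Finset.mem_univ j) h0)
  rw [finsum_eq_sum_of_support_subset _ h2]
  have h1 : ∀ j, ∑ᶠ n, f j n = ∑ n ∈ (hf j).toFinset, f j n := fun j => finsum_eq_sum _ (hf j)
  simp only [h1]
  rw [Finset.prod_univ_sum]

/-- Given a Smith factorization `Ξ = Θ₁ Σ Θ₂` and univariate orthogonal filter
families `g_j^k`, `k ∈ ℤ_{σ_j}`, the filters
`b_η := (g₁^{η₁} ⊗ ⋯ ⊗ g_s^{η_s})(Θ₁^{-1}·)`, `η ∈ ℤ_{σ₁}×⋯×ℤ_{σ_s}`,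
satisfy the filterbank QMF identity
`∑_α b_η(α) b_{η'}(α − Ξγ) = |det Ξ| δ_{η,η'} δ(γ)`. -/
theorem filterbank_QMF_identity
    {s : ℕ} (Ξ Θ₁ Θ₂ Θ₁inv : Matrix (Fin s) (Fin s) ℤ)
    (σ : Fin s → ℤ) (g : Fin s → ℤ → ℤ → ℝ)
    -- Smith factorization
    (hSmith : Ξ = Θ₁ * Matrix.diagonal σ * Θ₂)
    (hΘ₁ : |Θ₁.det| = 1) (hΘ₂ : |Θ₂.det| = 1)
    (hΘ₁inv : Θ₁ * Θ₁inv = 1 ∧ Θ₁inv * Θ₁ = 1)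
    -- finite support of the univariate filters
    (hfin : ∀ j k, (Function.support (g j k)).Finite)
    -- univariate QMF relations: ∑_n g_j^k(n) g_j^{k'}(n − σ_j m) = |σ_j| δ_{k,k'} δ(m)
    (hQMF : ∀ j : Fin s, ∀ k k' : ℤ, 0 ≤ k → k < σ j → 0 ≤ k' → k' < σ j →
      ∀ m : ℤ, ∑ᶠ n : ℤ, g j k n * g j k' (n - σ j * m) =
        |(σ j : ℝ)| * (if k = k' then (1 : ℝ) else 0) * (if m = 0 then (1 : ℝ) else 0))
    -- the filterbank filters b_η
    (b : (Fin s → ℤ) → (Fin s → ℤ) → ℝ)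
    (hb : ∀ η α : Fin s → ℤ, b η α = ∏ j : Fin s, g j (η j) (Θ₁inv.mulVec α j)) :
    ∀ η η' : Fin s → ℤ,
      (∀ j, 0 ≤ η j ∧ η j < σ j) → (∀ j, 0 ≤ η' j ∧ η' j < σ j) →
      ∀ γ : Fin s → ℤ,
        ∑ᶠ α : Fin s → ℤ, b η α * b η' (α - Ξ.mulVec γ) =
          |(Ξ.det : ℝ)| * (if η = η' then (1 : ℝ) else 0) *
            (if γ = 0 then (1 : ℝ) else 0) := by
  intro η η' hη hη' γ
  classical
  obtain ⟨hA, hB⟩ := hΘ₁inv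
  set m : Fin s → ℤ := Θ₂.mulVec γ with hm
  have hinv : ∀ v : Fin s → ℤ, Θ₁inv.mulVec (Θ₁.mulVec v) = v := by
    intro v; rw [Matrix.mulVec_mulVec, hB, Matrix.one_mulVec]
  have hbij : Function.Bijective (fun β : Fin s → ℤ => Θ₁.mulVec β) := by
    refine ⟨fun x y h => ?_, fun x => ⟨Θ₁inv.mulVec x, ?_⟩⟩
    · have := congrArg Θ₁inv.mulVec h; simpa [hinv] using this
    · simp only [Matrix.mulVec_mulVec, hA, Matrix.one_mulVec]
  have hXi : Θ₁inv.mulVec (Ξ.mulVec γ) = (Matrix.diagonal σ).mulVec m := by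
    rw [hm, hSmith, Matrix.mulVec_mulVec, Matrix.mulVec_mulVec,
      ← Matrix.mul_assoc, ← Matrix.mul_assoc, hB, Matrix.one_mul]
  -- Step 1 : change of variables α = Θ₁ β
  have step1 : ∑ᶠ α : Fin s → ℤ, b η α * b η' (α - Ξ.mulVec γ)
      = ∑ᶠ β : Fin s → ℤ, ∏ j, (g j (η j) (β j) * g j (η' j) (β j - σ j * m j)) := by
    rw [← finsum_comp (fun β : Fin s → ℤ => Θ₁.mulVec β) hbij]
    apply finsum_congr
    intro β
    rw [hb, hb, ← Finset.prod_mul_distrib]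
    apply Finset.prod_congr rfl
    intro j _
    have h1 : Θ₁inv.mulVec (Θ₁.mulVec β - Ξ.mulVec γ) j = β j - σ j * m j := by
      rw [Matrix.mulVec_sub, hinv, hXi]
      simp [Matrix.mulVec_diagonal]
    rw [hinv, h1]
  -- Step 2 : factorize the multidimensional sum
  have hsupp : ∀ j : Fin s,
      (Function.support (fun n => g j (η j) n * g j (η' j) (n - σ j * m j))).Finite := by
    intro j
    apply Set.Finite.subset (hfin j (η j))
    intro n hn
    simp only [Function.mem_support] at hn ⊢
    exact fun h0 => hn (by rw [h0, zero_mul])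
  have step2 : ∑ᶠ β : Fin s → ℤ, ∏ j, (g j (η j) (β j) * g j (η' j) (β j - σ j * m j))
      = ∏ j, ∑ᶠ n : ℤ, g j (η j) n * g j (η' j) (n - σ j * m j) :=
    finsum_pi_prod_aux _ hsupp
  -- Step 3 : apply the univariate QMF relations
  have step3 : ∏ j, (∑ᶠ n : ℤ, g j (η j) n * g j (η' j) (n - σ j * m j))
      = ∏ j, (|(σ j : ℝ)| * (if η j = η' j then (1:ℝ) else 0) *
          (if m j = 0 then (1:ℝ) else 0)) := by
    apply Finset.prod_congr rfl
    intro j _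
    exact hQMF j (η j) (η' j) (hη j).1 (hη j).2 (hη' j).1 (hη' j).2 (m j)
  -- determinant
  have hdet : |(Ξ.det : ℝ)| = ∏ j, |(σ j : ℝ)| := by
    have hz : |Ξ.det| = ∏ j, |σ j| := by
      rw [hSmith, Matrix.det_mul, Matrix.det_mul, Matrix.det_diagonal,
        abs_mul, abs_mul, hΘ₁, hΘ₂, one_mul, mul_one, Finset.abs_prod]
    rw [← Int.cast_abs, hz]
    push_cast
    rfl
  -- m = 0 ↔ γ = 0
  have hγ : (∀ j, m j = 0) ↔ γ = 0 := by
    constructor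
    · intro h
      have hmz : Θ₂.mulVec γ = 0 := funext h
      have hu : IsUnit Θ₂.det := by
        rcases abs_eq (by norm_num : (0:ℤ) ≤ 1) |>.mp hΘ₂ with h1 | h1 <;>
          simp [Int.isUnit_iff, h1]
      have hinv2 : Θ₂⁻¹ * Θ₂ = 1 := Matrix.nonsing_inv_mul Θ₂ hu
      calc γ = (Θ₂⁻¹ * Θ₂).mulVec γ := by rw [hinv2, Matrix.one_mulVec]
        _ = Θ₂⁻¹.mulVec (Θ₂.mulVec γ) := by rw [← Matrix.mulVec_mulVec]
        _ = 0 := by rw [hmz, Matrix.mulVec_zero]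
    · intro h j
      simp [hm, h, Matrix.mulVec_zero]
  rw [step1, step2, step3]
  rw [Finset.prod_mul_distrib, Finset.prod_mul_distrib, Finset.prod_boole, Finset.prod_boole]
  rw [hdet]
  congr 1
  · congr 1
    simp [funext_iff]
  · simp only [Finset.mem_univ, forall_true_left]
    rw [if_congr hγ rfl rfl]
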